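/- Let K'/K be a finite Galois extension of fields with Galois group H, let A be a K-algebra, and set A' = A ⊗_K K'. Let M be an A'-module equipped with a semilinear H-action (i.e., h(a·m) = h(a)·h(m) for a ∈ A', where H acts on A' through the second factor). Then the natural map M^H ⊗_{A} A' → M is an isomorphism when M is finitely generated over A'. In particular for a finite A'-module M with semilinear H-action, M^H ⊗_K K' ≅ M as A'-modules. -/

import Mathlib

open TensorProduct

noncomputable section

section AuxField
open scoped Classical
set_option linter.unusedSectionVars false

variable (K K' : Type) [Field K] [Field K'] [Algebra K K']
  [IsGalois K K'] [FiniteDimensional K K']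

/-- Dedekind linear independence specialized to `AlgEquiv`s. -/
lemma gd_dedekind (a : (K' ≃ₐ[K] K') → K')
    (h : ∀ j, ∑ σ : K' ≃ₐ[K] K',
      a σ * σ (Module.finBasis K K' j) = 0) : a = 0 := by
  classical
  have hli : LinearIndependent K'
      (fun σ : K' ≃ₐ[K] K' => (σ.toAlgHom.toLinearMap : K' →ₗ[K] K')) := by
    refine (linearIndependent_toLinearMap K K' K').comp
      (fun σ : K' ≃ₐ[K] K' => σ.toAlgHom) ?_
    intro σ τ hστ
    exact AlgEquiv.ext fun x => AlgHom.ext_iff.1 hστ x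
  have hφ : (∑ σ : K' ≃ₐ[K] K',
      a σ • (σ.toAlgHom.toLinearMap : K' →ₗ[K] K')) = 0 := by
    refine Module.Basis.ext (Module.finBasis K K') fun j => ?_
    simp only [LinearMap.sum_apply, LinearMap.smul_apply, AlgHom.toLinearMap_apply,
      AlgEquiv.coe_algHom, LinearMap.zero_apply, smul_eq_mul]
    exact h j
  have := Fintype.linearIndependent_iff.mp hli a hφ
  funext σ; exact this σ

/-- The Galois matrix `(σ (b j))` is invertible; we only record the two dual-basis style
consequences we need. -/
lemma gd_isUnit_mat :
    IsUnit (Matrix.of fun i j =>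
      ((Fintype.equivFinOfCardEq (Fintype.card_eq_nat_card.trans (IsGalois.card_aut_eq_finrank K K'))).symm i)
        (Module.finBasis K K' j)) := by
  classical
  rw [← Matrix.linearIndependent_rows_iff_isUnit]
  have hrows : LinearIndependent K'
      (fun σ : K' ≃ₐ[K] K' =>
        (fun j => σ (Module.finBasis K K' j) : Fin (Module.finrank K K') → K')) := by
    rw [Fintype.linearIndependent_iff]
    intro a ha
    have h : ∀ j, ∑ σ : K' ≃ₐ[K] K', a σ * σ (Module.finBasis K K' j) = 0 := by
      intro j
      have := congr_fun ha j
      simpa [Finset.sum_apply] using this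
    have h0 := gd_dedekind K K' a h
    intro σ; exact congr_fun h0 σ
  exact hrows.comp _ (Equiv.symm _).injective

lemma gd_exists_e :
    ∃ u : Fin (Module.finrank K K') → K', ∀ σ : K' ≃ₐ[K] K',
      ∑ j, u j * σ (Module.finBasis K K' j) = if σ = 1 then 1 else 0 := by
  classical
  have hM := gd_isUnit_mat K K'
  set e := Fintype.equivFinOfCardEq (Fintype.card_eq_nat_card.trans (IsGalois.card_aut_eq_finrank K K')) with he
  set Mt := (Matrix.of fun i j =>
      (e.symm i) (Module.finBasis K K' j)) with hMt
  have hdet : IsUnit Mt.det := (Matrix.isUnit_iff_isUnit_det _).1 hM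
  set v : Fin (Module.finrank K K') → K' := fun i => if e.symm i = 1 then 1 else 0 with hv
  set u := Mt⁻¹.mulVec v with hu
  refine ⟨u, fun σ => ?_⟩
  have h1 : Mt.mulVec u = v := by
    rw [hu, Matrix.mulVec_mulVec, Matrix.mul_nonsing_inv _ hdet, Matrix.one_mulVec]
  have h2 := congr_fun h1 (e σ)
  simp only [Matrix.mulVec, dotProduct, hv, hMt, Matrix.of_apply,
    Equiv.symm_apply_apply] at h2
  rw [← h2]
  exact Finset.sum_congr rfl fun j _ => mul_comm _ _

lemma gd_exists_a (j0 : Fin (Module.finrank K K')) :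
    ∃ a : (K' ≃ₐ[K] K') → K', ∀ j,
      ∑ σ : K' ≃ₐ[K] K', a σ * σ (Module.finBasis K K' j) = if j = j0 then 1 else 0 := by
  classical
  have hM := gd_isUnit_mat K K'
  set e := Fintype.equivFinOfCardEq (Fintype.card_eq_nat_card.trans (IsGalois.card_aut_eq_finrank K K')) with he
  set Mt := (Matrix.of fun i j =>
      (e.symm i) (Module.finBasis K K' j)) with hMt
  have hdet : IsUnit Mt.det := (Matrix.isUnit_iff_isUnit_det _).1 hM
  set d : Fin (Module.finrank K K') → K' := fun j => if j = j0 then 1 else 0 with hd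
  set w := Matrix.vecMul d Mt⁻¹ with hw
  refine ⟨fun σ => w (e σ), fun j => ?_⟩
  have h1 : Matrix.vecMul w Mt = d := by
    rw [hw, Matrix.vecMul_vecMul, Matrix.nonsing_inv_mul _ hdet, Matrix.vecMul_one]
  have h2 := congr_fun h1 j
  simp only [Matrix.vecMul, dotProduct, hd] at h2
  rw [← h2]
  refine Fintype.sum_equiv e _ _ fun σ => ?_
  simp [hMt, Matrix.of_apply, Equiv.symm_apply_apply]

end AuxField

variable (K K' A : Type) [Field K] [Field K'] [Algebra K K']
  [CommRing A] [Algebra K A]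

/-- The Galois action of `σ ∈ H = Gal(K'/K)` on `A' = A ⊗_K K'` through the second factor. -/
def galAct (σ : K' ≃ₐ[K] K') : (A ⊗[K] K') →ₐ[K] (A ⊗[K] K') :=
  Algebra.TensorProduct.map (AlgHom.id K A) σ.toAlgHom

variable (M : Type) [AddCommGroup M] [Module (A ⊗[K] K') M]
  [Module A M] [IsScalarTower A (A ⊗[K] K') M]

/-- The `A`-submodule of `H`-invariants `M^H` of an `A ⊗_K K'`-module `M` equipped with a
semilinear action `ρ` of `H = Gal(K'/K)`. -/
def invariants (ρ : (K' ≃ₐ[K] K') → M →+ M)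
    (hsemi : ∀ (σ : K' ≃ₐ[K] K') (a : A ⊗[K] K') (m : M),
      ρ σ (a • m) = (galAct K K' A σ a) • (ρ σ m)) : Submodule A M where
  carrier := {m | ∀ σ, ρ σ m = m}
  add_mem' := by
    intro a b ha hb σ
    rw [map_add, ha σ, hb σ]
  zero_mem' := by
    intro σ
    simp
  smul_mem' := by
    intro c m hm σ
    have h1 : c • m = (algebraMap A (A ⊗[K] K') c) • m := (algebraMap_smul _ c m).symm
    have h2 : galAct K K' A σ (algebraMap A (A ⊗[K] K') c) = algebraMap A (A ⊗[K] K') c := by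
      simp [galAct, Algebra.TensorProduct.algebraMap_apply]
    rw [h1, hsemi, hm σ, h2, algebraMap_smul]

/-- **Galois descent for modules.**
Let `K'/K` be a finite Galois extension with group `H = Gal(K'/K)`, `A` a `K`-algebra,
and `A' = A ⊗_K K'`.  Let `M` be a finitely generated `A'`-module equipped with a
semilinear `H`-action `ρ` (i.e. `ρ σ (a • m) = σ(a) • ρ σ m`, where `H` acts on `A'`
through the second tensor factor).  Then the natural map `M^H ⊗_A A' → M`,
`m ⊗ a ↦ a • m`, is an isomorphism. -/
theorem galois_descent_bijective [IsGalois K K'] [FiniteDimensional K K']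
    (ρ : (K' ≃ₐ[K] K') → M →+ M)
    (hone : ρ 1 = AddMonoidHom.id M)
    (hmul : ∀ σ τ : K' ≃ₐ[K] K', ρ (σ * τ) = (ρ σ).comp (ρ τ))
    (hsemi : ∀ (σ : K' ≃ₐ[K] K') (a : A ⊗[K] K') (m : M),
      ρ σ (a • m) = (galAct K K' A σ a) • (ρ σ m))
    [Module.Finite (A ⊗[K] K') M] :
    Function.Bijective
      ((invariants K K' A M ρ hsemi).subtype.liftBaseChange (A ⊗[K] K')) := by
  classical
  set N := invariants K K' A M ρ hsemi with hN
  set Φ := N.subtype.liftBaseChange (A ⊗[K] K') with hΦ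
  set n := Module.finrank K K' with hn
  set bb := Module.finBasis K K' with hbb
  have hgal : ∀ (σ : K' ≃ₐ[K] K') (c : K') (m : M),
      ρ σ (((1 : A) ⊗ₜ[K] c) • m) = ((1 : A) ⊗ₜ[K] σ c) • ρ σ m := by
    intro σ c m
    have hL : galAct K K' A σ ((1 : A) ⊗ₜ[K] c) = (1 : A) ⊗ₜ[K] σ c := by
      simp [galAct]
    rw [hsemi, hL]
  have hinv : ∀ (x : N) (σ : K' ≃ₐ[K] K'), ρ σ (x : M) = x := fun x => x.2
  have hΦt : ∀ (a : A ⊗[K] K') (x : N), Φ (a ⊗ₜ[A] x) = a • (x : M) := by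
    intro a x
    simp [hΦ, LinearMap.liftBaseChange_tmul]
  constructor
  · -- injectivity
    rw [injective_iff_map_eq_zero]
    have stepA : ∀ x : (A ⊗[K] K') ⊗[A] N,
        ∃ g : Fin n → N, x = ∑ j, ((1 : A) ⊗ₜ[K] bb j) ⊗ₜ[A] g j := by
      intro x
      induction x using TensorProduct.induction_on with
      | zero => exact ⟨0, by simp⟩
      | tmul a y =>
        refine ⟨fun j => (bb.baseChange A).repr a j • y, ?_⟩
        have ha : a = ∑ j, (bb.baseChange A).repr a j • ((1 : A) ⊗ₜ[K] bb j) := by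
          conv_lhs => rw [← (bb.baseChange A).sum_repr a]
          exact Finset.sum_congr rfl fun j _ => by rw [Module.Basis.baseChange_apply]
        conv_lhs => rw [ha]
        rw [TensorProduct.sum_tmul]
        exact Finset.sum_congr rfl fun j _ => TensorProduct.smul_tmul _ _ _
      | add x y hx hy =>
        obtain ⟨g1, rfl⟩ := hx
        obtain ⟨g2, rfl⟩ := hy
        refine ⟨g1 + g2, ?_⟩
        rw [← Finset.sum_add_distrib]
        exact Finset.sum_congr rfl fun j _ => by simp [TensorProduct.tmul_add]
    have stepB : ∀ g : Fin n → N,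
        (∑ j, ((1 : A) ⊗ₜ[K] bb j) • (g j : M)) = 0 → ∀ j, g j = 0 := by
      intro g hg j0
      obtain ⟨a, ha⟩ := gd_exists_a K K' j0
      have hσ : ∀ σ : K' ≃ₐ[K] K',
          ∑ j, ((1 : A) ⊗ₜ[K] σ (bb j)) • (g j : M) = 0 := by
        intro σ
        calc ∑ j, ((1 : A) ⊗ₜ[K] σ (bb j)) • (g j : M)
            = ∑ j, ρ σ (((1 : A) ⊗ₜ[K] bb j) • (g j : M)) :=
              (Finset.sum_congr rfl fun j _ => by rw [hgal, hinv (g j) σ]).symm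
          _ = ρ σ (∑ j, ((1 : A) ⊗ₜ[K] bb j) • (g j : M)) := (map_sum _ _ _).symm
          _ = 0 := by rw [hg, map_zero]
      have key : ∑ σ : K' ≃ₐ[K] K', ((1 : A) ⊗ₜ[K] a σ) •
          (∑ j, ((1 : A) ⊗ₜ[K] σ (bb j)) • (g j : M)) = 0 := by
        refine Finset.sum_eq_zero fun σ _ => ?_
        rw [hσ σ, smul_zero]
      have e1 : ∀ σ : K' ≃ₐ[K] K', ((1 : A) ⊗ₜ[K] a σ) •
          (∑ j, ((1 : A) ⊗ₜ[K] σ (bb j)) • (g j : M))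
          = ∑ j, ((1 : A) ⊗ₜ[K] (a σ * σ (bb j))) • (g j : M) := by
        intro σ
        rw [Finset.smul_sum]
        exact Finset.sum_congr rfl fun j _ => by
          rw [smul_smul, Algebra.TensorProduct.tmul_mul_tmul, one_mul]
      rw [Finset.sum_congr rfl (fun σ _ => e1 σ), Finset.sum_comm] at key
      have e2 : ∀ j, ∑ σ : K' ≃ₐ[K] K', ((1 : A) ⊗ₜ[K] (a σ * σ (bb j))) • (g j : M)
          = ((1 : A) ⊗ₜ[K] (if j = j0 then (1 : K') else 0)) • (g j : M) := by
        intro j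
        rw [← Finset.sum_smul, ← TensorProduct.tmul_sum, ha j]
      rw [Finset.sum_congr rfl (fun j _ => e2 j)] at key
      have e3 : ∀ j, ((1 : A) ⊗ₜ[K] (if j = j0 then (1 : K') else 0)) • (g j : M)
          = if j = j0 then (g j : M) else 0 := by
        intro j
        by_cases h1 : j = j0
        · simp only [h1, if_pos]
          rw [← Algebra.TensorProduct.one_def, one_smul]
        · simp [h1]
      rw [Finset.sum_congr rfl (fun j _ => e3 j)] at key
      have key2 : (g j0 : M) = 0 := by simpa using key
      exact Subtype.ext (by simpa using key2)
    intro x hx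
    obtain ⟨g, rfl⟩ := stepA x
    have hsum : ∑ j, ((1 : A) ⊗ₜ[K] bb j) • (g j : M) = 0 := by
      rw [← hx, map_sum]
      exact (Finset.sum_congr rfl fun j _ => (hΦt _ _).symm).symm
    have hg0 := stepB g hsum
    refine Finset.sum_eq_zero fun j _ => ?_
    rw [hg0 j, TensorProduct.tmul_zero]
  · -- surjectivity
    intro m
    obtain ⟨u, hu⟩ := gd_exists_e K K'
    set t : Fin n → M := fun i => ∑ σ : K' ≃ₐ[K] K', ρ σ (((1 : A) ⊗ₜ[K] bb i) • m)
      with hti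
    have htmem : ∀ i, t i ∈ N := by
      intro i
      have h' : ∀ τ : K' ≃ₐ[K] K', ρ τ (t i) = t i := by
        intro τ
        rw [hti]
        simp only
        rw [map_sum]
        refine Fintype.sum_equiv (Equiv.mulLeft τ) _ _ fun σ => ?_
        rw [Equiv.coe_mulLeft, hmul]
        rfl
      exact h'
    refine ⟨∑ i, ((1 : A) ⊗ₜ[K] u i) ⊗ₜ[A] (⟨t i, htmem i⟩ : N), ?_⟩
    rw [map_sum]
    have e1 : ∀ i, Φ (((1 : A) ⊗ₜ[K] u i) ⊗ₜ[A] (⟨t i, htmem i⟩ : N))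
        = ∑ σ : K' ≃ₐ[K] K', ((1 : A) ⊗ₜ[K] (u i * σ (bb i))) • ρ σ m := by
      intro i
      rw [hΦt]
      show ((1 : A) ⊗ₜ[K] u i) • t i = _
      rw [hti]
      simp only
      rw [Finset.smul_sum]
      exact Finset.sum_congr rfl fun σ _ => by
        rw [hgal, smul_smul, Algebra.TensorProduct.tmul_mul_tmul, one_mul]
    rw [Finset.sum_congr rfl (fun i _ => e1 i), Finset.sum_comm]
    have e2 : ∀ σ : K' ≃ₐ[K] K', ∑ i, ((1 : A) ⊗ₜ[K] (u i * σ (bb i))) • ρ σ m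
        = if σ = 1 then ρ σ m else 0 := by
      intro σ
      rw [← Finset.sum_smul, ← TensorProduct.tmul_sum, hu σ]
      by_cases h1 : σ = 1
      · simp only [h1, if_pos]
        rw [← Algebra.TensorProduct.one_def, one_smul]
      · simp [h1]
    rw [Finset.sum_congr rfl (fun σ _ => e2 σ)]
    have e3 : ∑ σ : K' ≃ₐ[K] K', (if σ = 1 then ρ σ m else 0) = ρ 1 m := by simp
    rw [e3, hone]
    rfl

end
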